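/- arXiv:math/0411039 — 2 statements merged into one kernel-verified Lean document; each statement's English description precedes it below -/
import Mathlib

section
/- Let r be a k-local geodesic in a δ-hyperbolic geodesic metric space with k > 8δ. Then r is a (1/3, 2δ)-quasi-geodesic. -/
open Set

/-- `s` is the image of a geodesic segment from `x` to `y`. -/
def IsGeodesicSegment {M : Type*} [MetricSpace M] (s : Set M) (x y : M) : Prop :=
  ∃ f : ℝ → M, f 0 = x ∧ f (dist x y) = y ∧
    (∀ u ∈ Icc (0 : ℝ) (dist x y), ∀ v ∈ Icc (0 : ℝ) (dist x y),
      dist (f u) (f v) = |u - v|) ∧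
    s = f '' Icc (0 : ℝ) (dist x y)

/-- `M` is δ-hyperbolic (thin geodesic triangles). -/
def IsDeltaHyperbolic (M : Type*) [MetricSpace M] (δ : ℝ) : Prop :=
  ∀ (x y z : M) (a b c : Set M),
    IsGeodesicSegment a x y → IsGeodesicSegment b y z → IsGeodesicSegment c z x →
    ∀ p ∈ a, ∃ q ∈ b ∪ c, dist p q ≤ δ

/-- a point on a geodesic segment splits the distance. -/
lemma mem_geod_split {M : Type*} [MetricSpace M] {s : Set M} {x y p : M}
    (h : IsGeodesicSegment s x y) (hp : p ∈ s) : dist x p + dist p y = dist x y := by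
  obtain ⟨f, hf0, hfD, hiso, rfl⟩ := h
  obtain ⟨v, hv, rfl⟩ := hp
  have h0 : (0:ℝ) ∈ Icc (0:ℝ) (dist x y) := ⟨le_refl _, dist_nonneg⟩
  have hD : dist x y ∈ Icc (0:ℝ) (dist x y) := ⟨dist_nonneg, le_refl _⟩
  have e1 : dist x (f v) = v := by
    rw [← hf0, hiso 0 h0 v hv, abs_of_nonpos (by linarith [hv.1])]; ring
  have e2 : dist (f v) y = dist x y - v := by
    have h := hiso v hv _ hD
    rw [hfD, abs_of_nonpos (by linarith [hv.2])] at h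
    rw [h]; ring
  rw [e1, e2]; ring

/-- sub-segments of a geodesic segment are geodesic segments. -/
lemma sub_geod {M : Type*} [MetricSpace M] {f : ℝ → M} {D : ℝ}
    (hiso : ∀ u ∈ Icc (0 : ℝ) D, ∀ v ∈ Icc (0 : ℝ) D, dist (f u) (f v) = |u - v|)
    {u₁ u₂ : ℝ} (h₁ : u₁ ∈ Icc (0:ℝ) D) (h₂ : u₂ ∈ Icc (0:ℝ) D) :
    ∃ s, IsGeodesicSegment s (f u₁) (f u₂) ∧ s ⊆ f '' Icc (0:ℝ) D := by
  have hd : dist (f u₁) (f u₂) = |u₁ - u₂| := hiso u₁ h₁ u₂ h₂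
  rcases le_total u₁ u₂ with hle | hle
  · have hd' : dist (f u₁) (f u₂) = u₂ - u₁ := by rw [hd, abs_of_nonpos (by linarith)]; ring
    refine ⟨(fun v => f (u₁ + v)) '' Icc 0 (dist (f u₁) (f u₂)),
      ⟨fun v => f (u₁ + v), by simp, by rw [hd']; ring_nf, ?_, rfl⟩, ?_⟩
    · intro u hu v hv
      rw [hd'] at hu hv
      rw [hiso _ ⟨by linarith [hu.1, h₁.1], by linarith [hu.2, h₂.2]⟩
        _ ⟨by linarith [hv.1, h₁.1], by linarith [hv.2, h₂.2]⟩]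
      congr 1; ring
    · rintro p ⟨v, hv, rfl⟩
      rw [hd'] at hv
      exact ⟨u₁ + v, ⟨by linarith [hv.1, h₁.1], by linarith [hv.2, h₂.2]⟩, rfl⟩
  · have hd' : dist (f u₁) (f u₂) = u₁ - u₂ := by rw [hd, abs_of_nonneg (by linarith)]
    refine ⟨(fun v => f (u₁ - v)) '' Icc 0 (dist (f u₁) (f u₂)),
      ⟨fun v => f (u₁ - v), by simp, by rw [hd']; ring_nf, ?_, rfl⟩, ?_⟩
    · intro u hu v hv
      rw [hd'] at hu hv
      rw [hiso _ ⟨by linarith [hu.2, h₂.1], by linarith [hu.1, h₁.2]⟩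
        _ ⟨by linarith [hv.2, h₂.1], by linarith [hv.1, h₁.2]⟩]
      rw [show u₁ - u - (u₁ - v) = -(u - v) by ring, abs_neg]
    · rintro p ⟨v, hv, rfl⟩
      rw [hd'] at hv
      exact ⟨u₁ - v, ⟨by linarith [hv.2, h₂.1], by linarith [hv.1, h₁.2]⟩, rfl⟩

section Main
open Metric
variable {M : Type*} [MetricSpace M] {δ k : ℝ} {r : ℝ → M} {L : ℝ}

/-- the restriction of the local geodesic to a short interval is a geodesic segment. -/
lemma rseg_geod (hloc : ∀ s t : ℝ, 0 ≤ s → s ≤ t → t ≤ L → t - s ≤ k → dist (r s) (r t) = t - s)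
    {a b : ℝ} (ha : 0 ≤ a) (hab : a ≤ b) (hbL : b ≤ L) (hbk : b - a ≤ k) :
    IsGeodesicSegment (r '' Icc a b) (r a) (r b) := by
  have hd : dist (r a) (r b) = b - a := hloc a b ha hab hbL hbk
  refine ⟨fun v => r (a + v), by simp, by rw [hd]; ring_nf, ?_, ?_⟩
  · intro u hu v hv
    dsimp only
    rw [hd] at hu hv
    rcases le_total u v with h | h
    · rw [hloc (a+u) (a+v) (by linarith [hu.1]) (by linarith) (by linarith [hv.2])
        (by linarith [hv.2, hu.1]), abs_of_nonpos (by linarith)]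
      ring
    · rw [dist_comm, hloc (a+v) (a+u) (by linarith [hv.1]) (by linarith) (by linarith [hu.2])
        (by linarith [hu.2, hv.1]), abs_of_nonneg (by linarith)]
      ring
  · rw [hd]
    ext p
    constructor
    · rintro ⟨v, hv, rfl⟩; exact ⟨v - a, ⟨by linarith [hv.1], by linarith [hv.2]⟩, by ring_nf⟩
    · rintro ⟨v, hv, rfl⟩; exact ⟨a + v, ⟨by linarith [hv.1], by linarith [hv.2]⟩, rfl⟩

lemma stepA (hδ : 0 ≤ δ) (hk : 8 * δ < k)
    (hgeod : ∀ x y : M, ∃ s : Set M, IsGeodesicSegment s x y)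
    (hhyp : IsDeltaHyperbolic M δ)
    (hloc : ∀ s t : ℝ, 0 ≤ s → s ≤ t → t ≤ L → t - s ≤ k → dist (r s) (r t) = t - s)
    {s t : ℝ} (hs : 0 ≤ s) (hst : s ≤ t) (htL : t ≤ L)
    {g : Set M} (hg : IsGeodesicSegment g (r s) (r t)) :
    ∀ u ∈ Icc s t, ∃ q ∈ g, dist (r u) q ≤ 2 * δ := by
  obtain ⟨f, hf0, hfD, hiso, hgeq⟩ := hg
  set D := dist (r s) (r t) with hDdef
  have hD : 0 ≤ D := dist_nonneg
  -- g is compact and nonempty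
  have hgc : IsCompact g := by
    rw [hgeq]
    exact isCompact_Icc.image_of_continuousOn
      ((LipschitzOnWith.of_dist_le_mul (K := 1)
        (fun x hx y hy => by rw [hiso x hx y hy]; simp [Real.dist_eq])).continuousOn)
  have hrs : r s ∈ g := by rw [hgeq]; exact ⟨0, ⟨le_refl _, hD⟩, hf0⟩
  have hrt : r t ∈ g := by rw [hgeq]; exact ⟨D, ⟨hD, le_refl _⟩, hfD⟩
  have hgne : g.Nonempty := ⟨r s, hrs⟩
  -- continuity of u ↦ infDist (r u) g on [s,t]
  have hkpos : 0 < k := by linarith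
  have hrcont : ContinuousOn r (Icc s t) := by
    intro u hu
    rw [Metric.continuousWithinAt_iff]
    intro ε hε
    refine ⟨min ε k, lt_min hε hkpos, fun v hv hd => ?_⟩
    have hdv : dist (r v) (r u) = |v - u| := by
      rcases le_total v u with h | h
      · rw [hloc v u (by linarith [hv.1, hs]) h (by linarith [hu.2]) (by
          rw [Real.dist_eq] at hd; have := abs_le.mp (le_of_lt (lt_of_lt_of_le hd (min_le_right _ _)));
          linarith [this.2, abs_nonneg (v-u), neg_abs_le (v-u), this.1]), abs_of_nonpos (by linarith)]
        · ring_nf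
      · rw [dist_comm, hloc u v (by linarith [hu.1, hs]) h (by linarith [hv.2]) (by
          rw [Real.dist_eq] at hd; have := abs_le.mp (le_of_lt (lt_of_lt_of_le hd (min_le_right _ _)));
          linarith [this.2]), abs_of_nonneg (by linarith)]
    rw [hdv, ← Real.dist_eq]
    exact lt_of_lt_of_le hd (min_le_left _ _)
  have hFcont : ContinuousOn (fun u => infDist (r u) g) (Icc s t) :=
    (continuous_infDist_pt g).comp_continuousOn hrcont
  -- maximizer
  obtain ⟨u₀, hu₀, hmax⟩ := isCompact_Icc.exists_isMaxOn ⟨s, ⟨le_refl _, hst⟩⟩ hFcont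
  intro u hu
  obtain ⟨q, hqg, hqd⟩ := hgc.exists_infDist_eq_dist hgne (r u)
  refine ⟨q, hqg, ?_⟩
  rw [← hqd]
  by_contra hcon
  push_neg at hcon
  have hF0 : 2 * δ < infDist (r u₀) g := lt_of_lt_of_le hcon (hmax hu)
  -- set up the quadrilateral
  set c := 2 * δ + k / 4 with hcdef
  have hc4 : 4 * δ < c := by simp only [hcdef]; linarith
  have hc2 : 2 * c < k := by simp only [hcdef]; linarith
  have hcpos : 0 < c := by linarith
  set a := max s (u₀ - c) with hadef
  set b := min t (u₀ + c) with hbdef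
  have hsa : s ≤ a := le_max_left _ _
  have hau : a ≤ u₀ := max_le hu₀.1 (by linarith)
  have hub : u₀ ≤ b := le_min hu₀.2 (by linarith)
  have hbt : b ≤ t := min_le_left _ _
  have hac : u₀ - a ≤ c := by simp only [hadef]; have := le_max_right s (u₀ - c); linarith
  have hbc : b - u₀ ≤ c := by simp only [hbdef]; have := min_le_right t (u₀ + c); linarith
  have hark : b - a ≤ k := by linarith
  have ha0 : 0 ≤ a := le_trans hs hsa
  have hbL : b ≤ L := le_trans hbt htL
  -- distances along r
  have dxy : dist (r a) (r u₀) = u₀ - a := hloc a u₀ ha0 hau (by linarith) (by linarith)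
  have dxz : dist (r u₀) (r b) = b - u₀ := hloc u₀ b (by linarith) hub hbL (by linarith)
  -- closest points on g
  obtain ⟨y', hy'g, hy'd⟩ := hgc.exists_infDist_eq_dist hgne (r a)
  obtain ⟨z', hz'g, hz'd⟩ := hgc.exists_infDist_eq_dist hgne (r b)
  have hFa : infDist (r a) g ≤ infDist (r u₀) g := hmax ⟨hsa, le_trans hau hu₀.2⟩
  have hFb : infDist (r b) g ≤ infDist (r u₀) g := hmax ⟨le_trans hsa (le_trans hau hub), hbt⟩
  -- triangle 1: vertices (r a) (r b) z', with x = r u₀ on side [r a, r b]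
  obtain ⟨b₁, hb₁⟩ := hgeod (r b) z'
  obtain ⟨c₁, hc₁⟩ := hgeod z' (r a)
  have hxmem : r u₀ ∈ r '' Icc a b := ⟨u₀, ⟨hau, hub⟩, rfl⟩
  obtain ⟨q₁, hq₁, hdq₁⟩ := hhyp (r a) (r b) z' _ b₁ c₁ (rseg_geod hloc ha0 (by linarith) hbL hark)
    hb₁ hc₁ (r u₀) hxmem
  have hFu₀ : infDist (r u₀) g ≤ 2 * δ := by
    rcases hq₁ with hq₁ | hq₁
    · -- q₁ on [r b, z']
      have hsplit : dist (r b) q₁ + dist q₁ z' = dist (r b) z' := mem_geod_split hb₁ hq₁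
      have h1 : dist (r b) z' = infDist (r b) g := hz'd.symm
      have t1 : dist (r u₀) (r b) ≤ dist (r u₀) q₁ + dist q₁ (r b) := dist_triangle _ _ _
      have e1 : dist q₁ (r b) = dist (r b) q₁ := dist_comm _ _
      have h3 : infDist (r u₀) g ≤ dist (r u₀) z' := infDist_le_dist_of_mem hz'g
      have h4 : dist (r u₀) z' ≤ dist (r u₀) q₁ + dist q₁ z' := dist_triangle _ _ _
      have key : infDist (r u₀) g ≤ 2 * δ + infDist (r b) g - (b - u₀) := by
        rw [← dxz]; linarith
      rcases min_cases t (u₀ + c) with ⟨hbeq, hble⟩ | ⟨hbeq, hble⟩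
      · -- b = t
        have hbe : b = t := hbdef.trans hbeq
        have hFbt : infDist (r b) g = 0 := by rw [hbe]; exact infDist_zero_of_mem hrt
        have h6 : infDist (r u₀) g ≤ b - u₀ := by
          have h7 : infDist (r u₀) g ≤ dist (r u₀) (r b) := by
            rw [hbe]; exact infDist_le_dist_of_mem hrt
          rw [dxz] at h7; exact h7
        linarith
      · -- b = u₀ + c
        have hbe : b = u₀ + c := hbdef.trans hbeq
        have : b - u₀ = c := by rw [hbe]; ring
        linarith
    · -- q₁ on [z', r a] : second triangle with vertices z', r a, y'
      obtain ⟨b₂, hb₂⟩ := hgeod (r a) y'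
      -- sub-geodesic of g from y' to z'
      obtain ⟨v₁, hv₁, hy'eq⟩ : ∃ v₁ ∈ Icc (0:ℝ) D, f v₁ = y' := by
        rw [hgeq] at hy'g; obtain ⟨v, hv, hveq⟩ := hy'g; exact ⟨v, hv, hveq⟩
      obtain ⟨v₂, hv₂, hz'eq⟩ : ∃ v₂ ∈ Icc (0:ℝ) D, f v₂ = z' := by
        rw [hgeq] at hz'g; obtain ⟨v, hv, hveq⟩ := hz'g; exact ⟨v, hv, hveq⟩
      obtain ⟨c₂, hc₂, hc₂sub⟩ := sub_geod hiso hv₁ hv₂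
      rw [hy'eq, hz'eq] at hc₂
      have hc₂sub' : c₂ ⊆ g := by rw [hgeq]; exact hc₂sub
      obtain ⟨q₂, hq₂, hdq₂⟩ := hhyp z' (r a) y' c₁ b₂ c₂ hc₁ hb₂ hc₂ q₁ hq₁
      have hxq₂ : dist (r u₀) q₂ ≤ 2 * δ := by
        calc dist (r u₀) q₂ ≤ dist (r u₀) q₁ + dist q₁ q₂ := dist_triangle _ _ _
        _ ≤ δ + δ := add_le_add hdq₁ hdq₂
        _ = 2 * δ := by ring
      rcases hq₂ with hq₂ | hq₂
      · -- q₂ on [r a, y']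
        have hsplit : dist (r a) q₂ + dist q₂ y' = dist (r a) y' := mem_geod_split hb₂ hq₂
        have h1 : dist (r a) y' = infDist (r a) g := hy'd.symm
        have t1 : dist (r a) (r u₀) ≤ dist (r a) q₂ + dist q₂ (r u₀) := dist_triangle _ _ _
        have e1 : dist q₂ (r u₀) = dist (r u₀) q₂ := dist_comm _ _
        have h3 : infDist (r u₀) g ≤ dist (r u₀) y' := infDist_le_dist_of_mem hy'g
        have h4 : dist (r u₀) y' ≤ dist (r u₀) q₂ + dist q₂ y' := dist_triangle _ _ _
        have key : infDist (r u₀) g ≤ 4 * δ + infDist (r a) g - (u₀ - a) := by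
          rw [← dxy]; linarith
        rcases max_cases s (u₀ - c) with ⟨haeq, hale⟩ | ⟨haeq, hale⟩
        · -- a = s
          have hae : a = s := hadef.trans haeq
          have hFas : infDist (r a) g = 0 := by rw [hae]; exact infDist_zero_of_mem hrs
          have h6 : infDist (r u₀) g ≤ u₀ - a := by
            have h7 : infDist (r u₀) g ≤ dist (r u₀) (r a) := by
              rw [hae]; exact infDist_le_dist_of_mem hrs
            rw [dist_comm, dxy] at h7; exact h7
          linarith
        · -- a = u₀ - c
          have hae : a = u₀ - c := hadef.trans haeq
          have : u₀ - a = c := by rw [hae]; ring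
          linarith
      · -- q₂ on sub-geodesic of g
        exact le_trans (infDist_le_dist_of_mem (hc₂sub' hq₂)) hxq₂
  linarith



lemma stepB (hδ : 0 ≤ δ) (hk : 8 * δ < k)
    (hgeod : ∀ x y : M, ∃ s : Set M, IsGeodesicSegment s x y)
    (hhyp : IsDeltaHyperbolic M δ)
    (hloc : ∀ s t : ℝ, 0 ≤ s → s ≤ t → t ≤ L → t - s ≤ k → dist (r s) (r t) = t - s) :
    ∀ n : ℕ, ∀ s t : ℝ, 0 ≤ s → s ≤ t → t ≤ L → t - s ≤ k + n * (3 * k / 4) →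
      (1 / 3) * (t - s) - 2 * δ ≤ dist (r s) (r t) := by
  have hkpos : 0 < k := by linarith
  intro n
  induction n with
  | zero =>
    intro s t hs hst htL hlen
    rw [hloc s t hs hst htL (by push_cast at hlen; linarith)]
    linarith
  | succ n ih =>
    intro s t hs hst htL hlen
    by_cases hsk : t - s ≤ k
    · rw [hloc s t hs hst htL hsk]; linarith
    push_neg at hsk
    set m := s + 3 * k / 4 with hmdef
    have hsm : s ≤ m := by simp only [hmdef]; linarith
    have hmt : m ≤ t := by simp only [hmdef]; linarith
    have hm0 : 0 ≤ m := le_trans hs hsm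
    have ihB := ih m t hm0 hmt htL (by push_cast at hlen ⊢; simp only [hmdef]; linarith)
    obtain ⟨g, hg⟩ := hgeod (r s) (r t)
    obtain ⟨q, hqg, hqd⟩ := stepA hδ hk hgeod hhyp hloc hs hst htL hg m ⟨hsm, hmt⟩
    have hsplit : dist (r s) q + dist q (r t) = dist (r s) (r t) := mem_geod_split hg hqg
    have hsm' : dist (r s) (r m) = 3 * k / 4 := by
      rw [hloc s m hs hsm (le_trans hmt htL) (by simp only [hmdef]; linarith)]
      simp only [hmdef]; ring
    have t1 : dist (r s) (r m) ≤ dist (r s) q + dist q (r m) := dist_triangle _ _ _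
    have t2 : dist (r m) (r t) ≤ dist (r m) q + dist q (r t) := dist_triangle _ _ _
    have e1 : dist q (r m) = dist (r m) q := dist_comm _ _
    have hmt' : m - s = 3 * k / 4 := by simp only [hmdef]; ring
    -- dist (r s) (r t) ≥ (h - 2δ) + (B - 2δ)
    linarith [hsm', ihB, hsplit, t1, t2, hqd, e1, hmt']

end Main

theorem stmt_10 (M : Type*) [MetricSpace M] (δ k : ℝ) (hδ : 0 ≤ δ) (hk : 8 * δ < k)
    (hgeod : ∀ x y : M, ∃ s : Set M, IsGeodesicSegment s x y)
    (hhyp : IsDeltaHyperbolic M δ)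
    (r : ℝ → M) (L : ℝ) (hL : 0 ≤ L)
    -- `r` is an arclength-parametrized `k`-local geodesic of length `L`:
    (hloc : ∀ s t : ℝ, 0 ≤ s → s ≤ t → t ≤ L → t - s ≤ k → dist (r s) (r t) = t - s) :
    -- then `r` is a `(1/3, 2δ)`-quasi-geodesic:
    ∀ s t : ℝ, 0 ≤ s → s ≤ t → t ≤ L →
      (1 / 3) * (t - s) - 2 * δ ≤ dist (r s) (r t) := by
  intro s t hs hst htL
  have hkpos : 0 < k := by linarith
  obtain ⟨n, hn⟩ := exists_nat_ge ((t - s) / (3 * k / 4))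
  have hlen : t - s ≤ k + n * (3 * k / 4) := by
    have h1 : t - s ≤ n * (3 * k / 4) := by
      rw [div_le_iff₀ (by linarith)] at hn
      linarith
    linarith
  exact stepB hδ hk hgeod hhyp hloc n s t hs hst htL hlen
end

section
/- Let F be a free group of rank at least 2 with basis containing a₁, a₂, and let v be a nontrivial element of F and n a positive integer. In the one-relator group H = ⟨a₁, a₂, … | vⁿ = 1⟩, the image of v has order exactly n. -/
/- Proof via a truncated Magnus embedding: the free group maps into the units of the
ring of noncommutative power series (monoid algebra of the free monoid) truncated in
degree > d; a reduced word has a nonzero coefficient in square-free degree, and the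
minimal-degree part Q of (image of v) - 1 is central with Q² = 0, which lets us build
a quotient group in which v has order exactly n. -/

namespace Stmt18
open Finset

variable {β : Type*} {α : Type*}

abbrev T (β : Type*) := MonoidAlgebra ℤ (FreeMonoid β)

instance (β : Type*) : CoeFun (T β) (fun _ => FreeMonoid β → ℤ) :=
  ⟨fun f => ⇑(MonoidAlgebra.coeff f)⟩

theorem add_apply' (u v : T β) (x : FreeMonoid β) : (u + v) x = u x + v x := rfl

theorem mul_apply_take_drop (f g : T β) (l : List β) :
    (f * g) (FreeMonoid.ofList l) =
      ∑ j ∈ Finset.range (l.length + 1),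
        f (FreeMonoid.ofList (l.take j)) * g (FreeMonoid.ofList (l.drop j)) := by
  classical
  induction f using MonoidAlgebra.induction_linear with
  | zero => simp
  | add f₁ f₂ h1 h2 =>
      rw [add_mul, add_apply', h1, h2, ← Finset.sum_add_distrib]
      apply Finset.sum_congr rfl
      intro j _
      rw [add_apply', add_mul]
  | single m a =>
    by_cases hpre : ∃ rest : List β, (FreeMonoid.toList m) ++ rest = l
    · obtain ⟨rest, hrest⟩ := hpre
      have hj₀le : (FreeMonoid.toList m).length ≤ l.length := by
        rw [← hrest]; simp
      have htake : l.take (FreeMonoid.toList m).length = FreeMonoid.toList m := by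
        rw [← hrest]; simp
      have hdrop : l.drop (FreeMonoid.toList m).length = rest := by
        rw [← hrest]; simp
      have hL : (MonoidAlgebra.single m a * g) (FreeMonoid.ofList l)
          = a * g (FreeMonoid.ofList rest) := by
        apply MonoidAlgebra.coeff_single_mul_eq_mul_coeff
        intro t _
        constructor
        · intro h
          have h2 : FreeMonoid.toList m ++ FreeMonoid.toList t = l := by
            have := congrArg FreeMonoid.toList h
            simpa [FreeMonoid.toList_mul] using this
          have ht : FreeMonoid.toList t = rest :=
            List.append_cancel_left (h2.trans hrest.symm)
          apply FreeMonoid.toList.injective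
          simpa using ht
        · rintro rfl
          apply FreeMonoid.toList.injective
          simp only [FreeMonoid.toList_mul, FreeMonoid.toList_ofList]
          exact hrest
      rw [hL]
      rw [Finset.sum_eq_single_of_mem (FreeMonoid.toList m).length
        (Finset.mem_range.2 (Nat.lt_succ_of_le hj₀le))]
      · rw [htake, hdrop]
        have : (MonoidAlgebra.single m a) (FreeMonoid.ofList (FreeMonoid.toList m)) = a := by
          rw [FreeMonoid.ofList_toList]
          simp [MonoidAlgebra.single_apply]
        rw [this]
      · intro j hj hne
        have hj' : j ≤ l.length := Nat.lt_succ_iff.1 (Finset.mem_range.1 hj)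
        have hz : (MonoidAlgebra.single m a) (FreeMonoid.ofList (l.take j)) = 0 := by
          rw [MonoidAlgebra.single_apply, if_neg]
          intro hEq
          have h3 : FreeMonoid.toList m = l.take j := congrArg FreeMonoid.toList hEq
          apply hne
          have hlen := congrArg List.length h3
          rw [List.length_take] at hlen
          omega
        rw [hz, zero_mul]
    · have hL : (MonoidAlgebra.single m a * g) (FreeMonoid.ofList l) = 0 := by
        apply MonoidAlgebra.single_mul_apply_of_not_exists_mul
        rintro ⟨dd, hdd⟩
        exact hpre ⟨FreeMonoid.toList dd, by
          have := congrArg FreeMonoid.toList hdd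
          simpa [FreeMonoid.toList_mul] using this.symm⟩
      rw [hL]
      symm
      apply Finset.sum_eq_zero
      intro j hj
      have hz : (MonoidAlgebra.single m a) (FreeMonoid.ofList (l.take j)) = 0 := by
        rw [MonoidAlgebra.single_apply, if_neg]
        intro hEq
        exact hpre ⟨l.drop j, by
          have h3 : FreeMonoid.toList m = l.take j := congrArg FreeMonoid.toList hEq
          rw [h3, List.take_append_drop]⟩
      rw [hz, zero_mul]

/-- truncation congruence -/
def tc (β : Type*) (d : ℕ) : RingCon (T β) where
  r f g := ∀ l : List β, l.length ≤ d → f (FreeMonoid.ofList l) = g (FreeMonoid.ofList l)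
  iseqv := ⟨fun _ _ _ => rfl, fun h l hl => (h l hl).symm,
    fun h h' l hl => (h l hl).trans (h' l hl)⟩
  mul' := by
    intro a b c' d' hab hcd l hl
    rw [mul_apply_take_drop, mul_apply_take_drop]
    apply Finset.sum_congr rfl
    intro j hj
    have h1 : (l.take j).length ≤ d := by rw [List.length_take]; omega
    have h2 : (l.drop j).length ≤ d := by rw [List.length_drop]; omega
    rw [hab _ h1, hcd _ h2]
  add' := by
    intro a b c' d' hab hcd l hl
    rw [add_apply', add_apply', hab l hl, hcd l hl]

abbrev R (β : Type*) (d : ℕ) := (tc β d).Quotient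

/-- coefficient of a short word -/
noncomputable def coeff (d : ℕ) (l : List β) (x : R β d) : ℤ :=
  if h : l.length ≤ d then
    Quotient.liftOn' x (fun f => f (FreeMonoid.ofList l)) (fun _ _ hfg => hfg l h)
  else 0

theorem coeff_coe (d : ℕ) (l : List β) (h : l.length ≤ d) (f : T β) :
    coeff d l (f : R β d) = f (FreeMonoid.ofList l) := by
  rw [coeff, dif_pos h]; rfl

theorem coe_surj (x : R β d) : ∃ f : T β, (f : R β d) = x := by
  induction x using Quotient.inductionOn' with
  | h f => exact ⟨f, rfl⟩

theorem eq_of_coeff {d : ℕ} (x y : R β d)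
    (h : ∀ l : List β, l.length ≤ d → coeff d l x = coeff d l y) : x = y := by
  obtain ⟨f, rfl⟩ := coe_surj x
  obtain ⟨g, rfl⟩ := coe_surj y
  refine (RingCon.eq (tc β d)).2 (fun l hl => ?_)
  have := h l hl
  rwa [coeff_coe _ _ hl, coeff_coe _ _ hl] at this

theorem coeff_zero (d : ℕ) (l : List β) : coeff d l (0 : R β d) = 0 := by
  by_cases h : l.length ≤ d
  · rw [← (tc β d).coe_zero, coeff_coe _ _ h]; rfl
  · rw [coeff, dif_neg h]

theorem coeff_one_nil (d : ℕ) : coeff d [] (1 : R β d) = 1 := by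
  rw [← (tc β d).coe_one, coeff_coe _ _ (by simp), MonoidAlgebra.one_def]
  classical
  rw [MonoidAlgebra.coeff_single_apply, if_pos FreeMonoid.ofList_nil.symm]

theorem coeff_one_ne (d : ℕ) (l : List β) (h : l.length ≤ d) (hl : l ≠ []) :
    coeff d l (1 : R β d) = 0 := by
  classical
  rw [← (tc β d).coe_one, coeff_coe _ _ h, MonoidAlgebra.one_def]
  rw [MonoidAlgebra.coeff_single_apply, if_neg]
  intro hEq
  exact hl (by simpa using (congrArg FreeMonoid.toList hEq).symm)

theorem coeff_mul (d : ℕ) (x y : R β d) (l : List β) (hl : l.length ≤ d) :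
    coeff d l (x * y) =
      ∑ j ∈ Finset.range (l.length + 1),
        coeff d (l.take j) x * coeff d (l.drop j) y := by
  obtain ⟨f, rfl⟩ := coe_surj x
  obtain ⟨g, rfl⟩ := coe_surj y
  rw [← (tc β d).coe_mul, coeff_coe _ _ hl, mul_apply_take_drop]
  apply Finset.sum_congr rfl
  intro j hj
  have h1 : (l.take j).length ≤ d := by rw [List.length_take]; omega
  have h2 : (l.drop j).length ≤ d := by rw [List.length_drop]; omega
  rw [coeff_coe _ _ h1, coeff_coe _ _ h2]

theorem coeff_sub (d : ℕ) (x y : R β d) (l : List β) :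
    coeff d l (x - y) = coeff d l x - coeff d l y := by
  by_cases h : l.length ≤ d
  · obtain ⟨f, rfl⟩ := coe_surj x
    obtain ⟨g, rfl⟩ := coe_surj y
    rw [← (tc β d).coe_sub, coeff_coe _ _ h, coeff_coe _ _ h, coeff_coe _ _ h]
    rfl
  · simp [coeff, dif_neg h]

theorem coeff_zsmul (d : ℕ) (t : ℤ) (x : R β d) (l : List β) :
    coeff d l (t • x) = t * coeff d l x := by
  by_cases h : l.length ≤ d
  · obtain ⟨f, rfl⟩ := coe_surj x
    rw [← (tc β d).coe_zsmul, coeff_coe _ _ h, coeff_coe _ _ h]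
    rw [MonoidAlgebra.coeff_smul_apply, smul_eq_mul]
  · simp [coeff, dif_neg h]


theorem tc_iff {β : Type*} {d : ℕ} {f g : T β} : (tc β d) f g ↔
    ∀ l : List β, l.length ≤ d → f (FreeMonoid.ofList l) = g (FreeMonoid.ofList l) :=
  Iff.rfl

theorem coeff_add (d : ℕ) (x y : R β d) (l : List β) :
    coeff d l (x + y) = coeff d l x + coeff d l y := by
  by_cases h : l.length ≤ d
  · obtain ⟨f, rfl⟩ := coe_surj x
    obtain ⟨g, rfl⟩ := coe_surj y
    rw [← (tc β d).coe_add, coeff_coe _ _ h, coeff_coe _ _ h, coeff_coe _ _ h]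
    rfl
  · simp [coeff, dif_neg h]

noncomputable def Xv (c : β) : T β := MonoidAlgebra.single (FreeMonoid.ofList [c]) 1
noncomputable def sv (c : β) (k : ℕ) : T β :=
  MonoidAlgebra.single (FreeMonoid.ofList (List.replicate k c)) ((-1)^k)
noncomputable def qv (d : ℕ) (c : β) : T β := ∑ k ∈ Finset.range (d+1), sv c k

theorem sv_zero (c : β) : sv c 0 = 1 := by
  rw [sv, MonoidAlgebra.one_def]
  simp [FreeMonoid.ofList_nil]

theorem Xv_mul_sv (c : β) (k : ℕ) : Xv c * sv c k = - sv c (k+1) := by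
  rw [Xv, sv, sv, MonoidAlgebra.single_mul_single]
  rw [← MonoidAlgebra.single_neg]
  have hm : FreeMonoid.ofList [c] * FreeMonoid.ofList (List.replicate k c)
      = FreeMonoid.ofList (List.replicate (k+1) c) := by
    rw [← FreeMonoid.ofList_append, List.replicate_succ]
    rfl
  rw [hm]
  congr 1
  rw [pow_succ]
  ring

theorem sv_mul_Xv (c : β) (k : ℕ) : sv c k * Xv c = - sv c (k+1) := by
  rw [Xv, sv, sv, MonoidAlgebra.single_mul_single]
  rw [← MonoidAlgebra.single_neg]
  have hm : FreeMonoid.ofList (List.replicate k c) * FreeMonoid.ofList [c]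
      = FreeMonoid.ofList (List.replicate (k+1) c) := by
    rw [← FreeMonoid.ofList_append, ← List.replicate_succ']
  rw [hm]
  congr 1
  rw [pow_succ]
  ring

theorem one_add_Xv_mul_qv (d : ℕ) (c : β) :
    (1 + Xv c) * qv d c = 1 - sv c (d+1) := by
  rw [add_mul, one_mul, qv, Finset.mul_sum]
  have h1 : ∑ k ∈ Finset.range (d+1), Xv c * sv c k
      = ∑ k ∈ Finset.range (d+1), -sv c (k+1) := by
    exact Finset.sum_congr rfl fun k _ => Xv_mul_sv c k
  rw [h1]
  have h2 : ∑ k ∈ Finset.range (d + 1), sv c k + ∑ k ∈ Finset.range (d+1), -sv c (k+1)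
      = ∑ k ∈ Finset.range (d+1), (sv c k - sv c (k+1)) := by
    rw [← Finset.sum_add_distrib]
    exact Finset.sum_congr rfl fun k _ => (sub_eq_add_neg _ _).symm
  rw [h2, Finset.sum_range_sub' (fun k => sv c k), sv_zero]

theorem qv_mul_one_add_Xv (d : ℕ) (c : β) :
    qv d c * (1 + Xv c) = 1 - sv c (d+1) := by
  rw [mul_add, mul_one, qv, Finset.sum_mul]
  have h1 : ∑ k ∈ Finset.range (d+1), sv c k * Xv c
      = ∑ k ∈ Finset.range (d+1), -sv c (k+1) := by
    exact Finset.sum_congr rfl fun k _ => sv_mul_Xv c k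
  rw [h1]
  have h2 : ∑ k ∈ Finset.range (d + 1), sv c k + ∑ k ∈ Finset.range (d+1), -sv c (k+1)
      = ∑ k ∈ Finset.range (d+1), (sv c k - sv c (k+1)) := by
    rw [← Finset.sum_add_distrib]
    exact Finset.sum_congr rfl fun k _ => (sub_eq_add_neg _ _).symm
  rw [h2, Finset.sum_range_sub' (fun k => sv c k), sv_zero]

theorem ofList_inj {l l' : List β} (h : FreeMonoid.ofList l = FreeMonoid.ofList l') :
    l = l' := by
  have := congrArg FreeMonoid.toList h
  simpa using this

/-- power-supported series with constant term 1 -/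
def PowS (c : β) (f : T β) : Prop :=
  (∀ l : List β, f (FreeMonoid.ofList l) ≠ 0 → ∃ k, l = List.replicate k c) ∧
    f (FreeMonoid.ofList []) = 1

theorem single_apply_self (m : FreeMonoid β) (a : ℤ) :
    (MonoidAlgebra.single m a : T β) m = a := by
  classical
  rw [MonoidAlgebra.coeff_single_apply, if_pos rfl]

theorem single_apply_ne (m m' : FreeMonoid β) (a : ℤ) (h : m ≠ m') :
    (MonoidAlgebra.single m a : T β) m' = 0 := by
  classical
  rw [MonoidAlgebra.coeff_single_apply, if_neg h]

theorem sv_apply_self (c : β) (k : ℕ) :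
    sv c k (FreeMonoid.ofList (List.replicate k c)) = (-1)^k := single_apply_self _ _

theorem sv_apply_ne (c : β) (k : ℕ) {l : List β} (h : l ≠ List.replicate k c) :
    sv c k (FreeMonoid.ofList l) = 0 :=
  single_apply_ne _ _ _ (fun hEq => h (ofList_inj hEq).symm)

theorem one_apply_nil : (1 : T β) (FreeMonoid.ofList []) = 1 := by
  rw [MonoidAlgebra.one_def, ← FreeMonoid.ofList_nil]
  exact single_apply_self _ _

theorem one_apply_ne {l : List β} (h : l ≠ []) : (1 : T β) (FreeMonoid.ofList l) = 0 := by
  rw [MonoidAlgebra.one_def, ← FreeMonoid.ofList_nil]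
  exact single_apply_ne _ _ _ (fun hEq => h (ofList_inj hEq).symm)

theorem Xv_apply_self (c : β) : Xv c (FreeMonoid.ofList [c]) = 1 := single_apply_self _ _

theorem Xv_apply_ne (c : β) {l : List β} (h : l ≠ [c]) : Xv c (FreeMonoid.ofList l) = 0 :=
  single_apply_ne _ _ _ (fun hEq => h (ofList_inj hEq).symm)

theorem powS_oneX (c : β) : PowS c (1 + Xv c) := by
  classical
  constructor
  · intro l hne
    rw [add_apply'] at hne
    by_cases h1 : l = []
    · exact ⟨0, by simp [h1]⟩
    · by_cases h2 : l = [c]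
      · exact ⟨1, by simp [h2]⟩
      · rw [one_apply_ne h1, Xv_apply_ne c h2] at hne
        simp at hne
  · rw [add_apply', one_apply_nil, Xv_apply_ne c (by simp)]
    simp

theorem qv_apply_sum (d : ℕ) (c : β) (l : List β) :
    qv d c (FreeMonoid.ofList l) = ∑ k ∈ Finset.range (d+1), sv c k (FreeMonoid.ofList l) := by
  rw [qv, MonoidAlgebra.coeff_sum, Finsupp.finset_sum_apply]

theorem powS_qv (d : ℕ) (c : β) : PowS c (qv d c) := by
  classical
  constructor
  · intro l hne
    rw [qv_apply_sum] at hne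
    obtain ⟨k, _, hk⟩ := Finset.exists_ne_zero_of_sum_ne_zero hne
    by_cases h : l = List.replicate k c
    · exact ⟨k, h⟩
    · exact absurd (sv_apply_ne c k h) hk
  · rw [qv_apply_sum, Finset.sum_eq_single 0]
    · rw [show ([] : List β) = List.replicate 0 c by simp, sv_apply_self]; norm_num
    · intro k _ hk
      apply sv_apply_ne
      intro hEq
      exact hk (by simpa using (congrArg List.length hEq).symm)
    · intro h; exact absurd (Finset.mem_range.2 (Nat.succ_pos d)) h

theorem oneX_at_self (c : β) : (1 + Xv c) (FreeMonoid.ofList [c]) = 1 := by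
  rw [add_apply', one_apply_ne (by simp), Xv_apply_self]
  simp

theorem qv_at_self (d : ℕ) (hd : 1 ≤ d) (c : β) :
    qv d c (FreeMonoid.ofList [c]) = -1 := by
  classical
  rw [qv_apply_sum, Finset.sum_eq_single 1]
  · rw [show [c] = List.replicate 1 c by simp, sv_apply_self]; norm_num
  · intro k _ hk
    apply sv_apply_ne
    intro hEq
    exact hk (by simpa using (congrArg List.length hEq).symm)
  · intro h; exact absurd (Finset.mem_range.2 (by omega)) h

theorem coe_sv_high (d : ℕ) (c : β) : ((sv c (d+1) : T β) : R β d) = 0 := by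
  rw [← (tc β d).coe_zero]
  refine (RingCon.eq (tc β d)).2 (tc_iff.2 fun l hl => ?_)
  rw [sv_apply_ne c (d+1) (fun hEq => by
    have := congrArg List.length hEq
    rw [List.length_replicate] at this
    omega)]
  rfl

/-- the elementary unit 1 + X_c in the truncated ring -/
noncomputable def uv (d : ℕ) (c : β) : (R β d)ˣ where
  val := ((1 + Xv c : T β) : R β d)
  inv := ((qv d c : T β) : R β d)
  val_inv := by
    rw [← (tc β d).coe_mul, one_add_Xv_mul_qv, (tc β d).coe_sub, coe_sv_high,
      sub_zero, (tc β d).coe_one]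
  inv_val := by
    rw [← (tc β d).coe_mul, qv_mul_one_add_Xv, (tc β d).coe_sub, coe_sv_high,
      sub_zero, (tc β d).coe_one]


theorem uv_val (d : ℕ) (c : β) : (uv d c).val = ((1 + Xv c : T β) : R β d) := rfl
theorem uv_inv_val (d : ℕ) (c : β) : ((uv d c)⁻¹).val = ((qv d c : T β) : R β d) := rfl

theorem chain'_take {l : List β} (h : l.Chain' (· ≠ ·)) (j : ℕ) :
    (l.take j).Chain' (· ≠ ·) := by
  rw [← List.take_append_drop j l, List.Chain', List.isChain_append] at h
  exact h.1

theorem chain'_drop {l : List β} (h : l.Chain' (· ≠ ·)) (j : ℕ) :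
    (l.drop j).Chain' (· ≠ ·) := by
  rw [← List.take_append_drop j l, List.Chain', List.isChain_append] at h
  exact h.2.1

theorem rep_le_one {c : β} {k : ℕ} (h : (List.replicate k c).Chain' (· ≠ ·)) : k ≤ 1 := by
  by_contra h2
  push_neg at h2
  obtain ⟨k', rfl⟩ : ∃ k', k = k' + 2 := ⟨k - 2, by omega⟩
  rw [List.replicate_succ, List.replicate_succ, List.Chain', List.isChain_cons_cons] at h
  exact h.1 rfl

theorem key1 : ∀ (E : List (β × T β)), (∀ p ∈ E, PowS p.1 p.2) →
    ∀ l : List β, l.Chain' (· ≠ ·) → E.length < l.length →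
    ((E.map Prod.snd).prod) (FreeMonoid.ofList l) = 0
  | [], _, l, _, hlen => by
      have hl : l ≠ [] := by
        intro h; rw [h] at hlen; simp at hlen
      simpa using one_apply_ne hl
  | (c, f) :: E', hE, l, hchain, hlen => by
      simp only [List.map_cons, List.prod_cons]
      rw [mul_apply_take_drop]
      apply Finset.sum_eq_zero
      intro j hj
      have hj' : j ≤ l.length := Nat.lt_succ_iff.1 (Finset.mem_range.1 hj)
      rcases eq_or_ne (f (FreeMonoid.ofList (l.take j))) 0 with h0 | h0
      · rw [h0, zero_mul]
      · obtain ⟨k, hk⟩ := (hE _ (List.mem_cons_self)).1 _ h0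
        have hk1 : k ≤ 1 := rep_le_one (hk ▸ chain'_take hchain j)
        have hlen' : E'.length < l.length := by
          simp only [List.length_cons] at hlen; omega
        interval_cases k
        · -- take j l = [] so j = 0
          have h00 : l.take j = [] := by simpa using hk
          have hj0 : j = 0 := by
            have := congrArg List.length h00
            rw [List.length_take, min_eq_left hj'] at this
            simpa using this
          subst hj0
          rw [List.drop_zero]
          rw [key1 E' (fun p hp => hE p (List.mem_cons_of_mem _ hp)) l hchain hlen']
          rw [mul_zero]
        · -- take j l = [c] so j = 1
          have hj1 : j = 1 := by
            have := congrArg List.length hk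
            rw [List.length_take, min_eq_left hj', List.length_replicate] at this
            exact this
          subst hj1
          have hlen'' : E'.length < (l.drop 1).length := by
            rw [List.length_drop]
            simp only [List.length_cons] at hlen; omega
          rw [key1 E' (fun p hp => hE p (List.mem_cons_of_mem _ hp)) (l.drop 1)
            (chain'_drop hchain 1) hlen'']
          rw [mul_zero]

theorem key0 : ∀ (E : List (β × T β)), (∀ p ∈ E, PowS p.1 p.2) →
    ((E.map Prod.snd).prod) (FreeMonoid.ofList []) = 1
  | [], _ => by simpa using one_apply_nil
  | (c, f) :: E', hE => by
      simp only [List.map_cons, List.prod_cons]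
      rw [mul_apply_take_drop]
      simp only [List.length_nil, List.take_nil, List.drop_nil]
      rw [show (0+1) = 1 from rfl, Finset.sum_range_one]
      rw [(hE _ (List.mem_cons_self)).2, one_mul]
      exact key0 E' (fun p hp => hE p (List.mem_cons_of_mem _ hp))

theorem key2 : ∀ (E : List (β × T β)), (∀ p ∈ E, PowS p.1 p.2) →
    (E.map Prod.fst).Chain' (· ≠ ·) →
    ((E.map Prod.snd).prod) (FreeMonoid.ofList (E.map Prod.fst)) =
      (E.map (fun p => p.2 (FreeMonoid.ofList [p.1]))).prod
  | [], _, _ => by simpa using one_apply_nil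
  | (c, f) :: E', hE, hchain => by
      simp only [List.map_cons, List.prod_cons]
      rw [mul_apply_take_drop]
      have hE' := fun p hp => hE p (List.mem_cons_of_mem _ hp)
      have hlen1 : 1 ∈ Finset.range ((c :: E'.map Prod.fst).length + 1) := by
        simp
      rw [Finset.sum_eq_single_of_mem 1 hlen1]
      · simp only [List.take_succ_cons, List.take_zero, List.drop_succ_cons, List.drop_zero]
        rw [key2 E' hE' (List.isChain_cons.1 hchain).2]
      · intro j hj hne
        have hj' : j ≤ (c :: E'.map Prod.fst).length :=
          Nat.lt_succ_iff.1 (Finset.mem_range.1 hj)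
        rcases eq_or_ne (f (FreeMonoid.ofList ((c :: E'.map Prod.fst).take j))) 0 with h0 | h0
        · rw [h0, zero_mul]
        · obtain ⟨k, hk⟩ := (hE _ (List.mem_cons_self)).1 _ h0
          have hk1 : k ≤ 1 := rep_le_one (hk ▸ chain'_take hchain j)
          interval_cases k
          · have h00 : (c :: E'.map Prod.fst).take j = [] := by simpa using hk
            have hj0 : j = 0 := by
              have := congrArg List.length h00
              rw [List.length_take, min_eq_left hj'] at this
              simpa using this
            subst hj0
            rw [List.drop_zero]
            rw [key1 E' hE' (c :: E'.map Prod.fst) (by simpa using hchain) (by simp), mul_zero]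
          · have hj1 : j = 1 := by
              have := congrArg List.length hk
              rw [List.length_take, min_eq_left hj', List.length_replicate] at this
              exact this
            exact absurd hj1 hne

/-- adjacency condition in a reduced word -/
def Radj (p q : α × Bool) : Prop := p.1 = q.1 → q.2 = p.2

theorem chain_of_noRed : ∀ (L : List (α × Bool)),
    (∀ (L₁ : List (α × Bool)) (x : α) (b : Bool) (L₂ : List (α × Bool)),
      L ≠ L₁ ++ (x,b) :: (x,!b) :: L₂) → L.Chain' Radj
  | [], _ => List.isChain_nil
  | [p], _ => List.isChain_singleton p
  | p :: q :: L'', h => by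
    rw [List.Chain', List.isChain_cons_cons]
    constructor
    · intro hpq
      by_contra hb
      have hq2 : q.2 = !p.2 := by
        cases hq : q.2 <;> cases hp : p.2 <;> simp_all
      have hq' : q = (p.1, !p.2) := Prod.ext_iff.2 ⟨hpq.symm, hq2⟩
      exact h [] p.1 p.2 L'' (by rw [hq']; rfl)
    · exact chain_of_noRed (q :: L'') (fun L₁ x b L₂ hEq => h (p :: L₁) x b L₂ (by rw [hEq]; rfl))

theorem chainRadj_toWord [DecidableEq α] (v : FreeGroup α) :
    (FreeGroup.toWord v).Chain' Radj := by
  apply chain_of_noRed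
  intro L₁ x b L₂ hEq
  exact FreeGroup.reduce.not (L₁ := v.toWord) (by rw [FreeGroup.reduce_toWord]; exact hEq)

/-- the variable word of a letter -/
def wl (p : α × Bool) : List (α × Bool) :=
  if p.2 then [(p.1,true),(p.1,false)] else [(p.1,false),(p.1,true)]

theorem chain_wl (L : List (α × Bool)) (h : L.Chain' Radj) :
    (L.flatMap wl).Chain' (· ≠ ·) := by
  induction L with
  | nil => simp [List.Chain']
  | cons p L' ih =>
    rw [List.flatMap_cons, List.Chain', List.isChain_append]
    refine ⟨?_, ih (List.isChain_cons.1 h).2, ?_⟩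
    · rcases p with ⟨x, b⟩
      cases b <;> simp [wl]
    · intro y hy z hz
      rcases L' with _ | ⟨p₂, L''⟩
      · simp at hz
      · have hR : Radj p p₂ := (List.isChain_cons.1 h).1 p₂ (by simp)
        rw [List.flatMap_cons] at hz
        rcases p with ⟨x, b⟩
        rcases p₂ with ⟨x₂, b₂⟩
        cases b <;> cases b₂ <;>
          simp [wl] at hy hz <;> subst hy <;> subst hz <;> simp <;>
          · intro hxx
            exact absurd (hR hxx) (by simp)
/-- per-letter list of (variable, series) pairs -/
noncomputable def pe (d : ℕ) : α × Bool → List ((α × Bool) × T (α × Bool))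
  | (x, true) => [((x,true), 1 + Xv (x,true)), ((x,false), 1 + Xv (x,false))]
  | (x, false) => [((x,false), qv d (x,false)), ((x,true), qv d (x,true))]

theorem pe_fst (d : ℕ) (p : α × Bool) : (pe d p).map Prod.fst = wl p := by
  rcases p with ⟨x, b⟩
  cases b <;> rfl

theorem pe_powS (d : ℕ) (p : α × Bool) : ∀ q ∈ pe d p, PowS q.1 q.2 := by
  rcases p with ⟨x, b⟩
  intro q hq
  cases b <;> simp [pe] at hq <;> rcases hq with rfl | rfl
  · exact powS_qv d _
  · exact powS_qv d _
  · exact powS_oneX _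
  · exact powS_oneX _

theorem flatMap_pe_fst (d : ℕ) (L : List (α × Bool)) :
    (L.flatMap (pe d)).map Prod.fst = L.flatMap wl := by
  rw [List.map_flatMap]
  simp only [pe_fst]

theorem flatMap_wl_length (L : List (α × Bool)) :
    (L.flatMap wl).length = 2 * L.length := by
  induction L with
  | nil => simp
  | cons p L' ih =>
    rw [List.flatMap_cons, List.length_append, ih]
    rcases p with ⟨x, b⟩
    cases b <;> simp [wl] <;> omega

theorem pe_powS_all (d : ℕ) (L : List (α × Bool)) :
    ∀ q ∈ L.flatMap (pe d), PowS q.1 q.2 := by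
  intro q hq
  rw [List.mem_flatMap] at hq
  obtain ⟨p, _, hq⟩ := hq
  exact pe_powS d p q hq

theorem pe_selfcoeff_prod (d : ℕ) (hd : 1 ≤ d) (L : List (α × Bool)) :
    ((L.flatMap (pe d)).map (fun q => q.2 (FreeMonoid.ofList [q.1]))).prod = 1 := by
  induction L with
  | nil => simp
  | cons p L' ih =>
    rw [List.flatMap_cons, List.map_append, List.prod_append, ih, mul_one]
    rcases p with ⟨x, b⟩
    cases b
    · simp only [pe, List.map_cons, List.map_nil, List.prod_cons, List.prod_nil, mul_one]
      rw [qv_at_self d hd, qv_at_self d hd]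
      norm_num
    · simp only [pe, List.map_cons, List.map_nil, List.prod_cons, List.prod_nil, mul_one]
      rw [oneX_at_self, oneX_at_self]
      norm_num

noncomputable def Uu (d : ℕ) (x : α) : (R (α × Bool) d)ˣ := uv d (x,true) * uv d (x,false)

noncomputable def Φ (d : ℕ) : FreeGroup α →* (R (α × Bool) d)ˣ :=
  FreeGroup.lift (fun x => Uu d x)

theorem val_Φ_mk (d : ℕ) (L : List (α × Bool)) :
    ((Φ d (FreeGroup.mk L) : (R (α × Bool) d)ˣ) : R (α × Bool) d)
      = ((((L.flatMap (pe d)).map Prod.snd).prod : T (α × Bool)) : R (α × Bool) d) := by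
  rw [Φ, FreeGroup.lift_mk]
  induction L with
  | nil => simp
  | cons p L' ih =>
    rw [List.map_cons, List.prod_cons, Units.val_mul, ih, List.flatMap_cons, List.map_append,
      List.prod_append, (tc (α × Bool) d).coe_mul]
    congr 1
    rcases p with ⟨x, b⟩
    cases b
    · show (((Uu d x)⁻¹ : (R (α × Bool) d)ˣ) : R (α × Bool) d) = _
      rw [Uu, mul_inv_rev, Units.val_mul, uv_inv_val, uv_inv_val]
      simp only [pe, List.map_cons, List.map_nil, List.prod_cons, List.prod_nil, mul_one]
      rw [(tc (α × Bool) d).coe_mul]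
    · show ((Uu d x : (R (α × Bool) d)ˣ) : R (α × Bool) d) = _
      rw [Uu, Units.val_mul, uv_val, uv_val]
      simp only [pe, List.map_cons, List.map_nil, List.prod_cons, List.prod_nil, mul_one]
      rw [(tc (α × Bool) d).coe_mul]
/-- truncation ring hom between levels -/
noncomputable def down {e d : ℕ} (h : e ≤ d) : R β d →+* R β e where
  toFun := Quotient.map' id (fun f g hfg =>
    tc_iff.2 (fun l hl => (tc_iff.1 hfg) l (le_trans hl h)))
  map_one' := rfl
  map_mul' := fun x y => Quotient.inductionOn₂' x y (fun f g => rfl)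
  map_zero' := rfl
  map_add' := fun x y => Quotient.inductionOn₂' x y (fun f g => rfl)

theorem down_coe {e d : ℕ} (h : e ≤ d) (f : T β) :
    down (β := β) h (f : R β d) = (f : R β e) := rfl

theorem coeff_down {e d : ℕ} (h : e ≤ d) (l : List β) (hl : l.length ≤ e) (x : R β d) :
    coeff e l (down h x) = coeff d l x := by
  induction x using Quotient.inductionOn' with
  | h f =>
    have : (Quotient.mk'' f : R β d) = (f : R β d) := rfl
    rw [this, down_coe h f, coeff_coe _ _ hl, coeff_coe _ _ (le_trans hl h)]

theorem down_Φ {e d : ℕ} (h : e ≤ d) (v : FreeGroup α) :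
    ((Φ e v : (R (α × Bool) e)ˣ) : R (α × Bool) e)
      = down h ((Φ d v : (R (α × Bool) d)ˣ) : R (α × Bool) d) := by
  have key : (Units.map (down (β := α × Bool) h).toMonoidHom).comp (Φ d) = Φ e := by
    apply FreeGroup.ext_hom
    intro a
    apply Units.ext
    rw [MonoidHom.comp_apply, Units.coe_map]
    show (down h) (((Φ d) (FreeGroup.of a) : (R (α × Bool) d)ˣ) : R (α × Bool) d)
      = ((Φ e (FreeGroup.of a) : (R (α × Bool) e)ˣ) : R (α × Bool) e)
    rw [Φ, Φ, FreeGroup.lift_apply_of, FreeGroup.lift_apply_of]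
    rw [Uu, Uu, Units.val_mul, Units.val_mul, map_mul, uv_val, uv_val, uv_val, uv_val,
      down_coe, down_coe]
  have := congrArg (fun ψ => ((ψ v : (R (α × Bool) e)ˣ) : R (α × Bool) e)) key
  simpa using this.symm
theorem master.{u} (α : Type u) (v : FreeGroup α) (hv : v ≠ 1) (n : ℕ) (hn : 0 < n) :
    ∃ (G : Type u) (_ : Group G) (ψ : FreeGroup α →* G), orderOf (ψ v) = n := by
  classical
  letI := Classical.decEq α
  set L := v.toWord with hLdef
  have hLne : L ≠ [] := fun h => hv (FreeGroup.toWord_eq_nil_iff.1 h)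
  have hLpos : 0 < L.length := List.length_pos_iff.2 hLne
  set W : List (α × Bool) := L.flatMap wl with hWdef
  have hWlen : W.length = 2 * L.length := flatMap_wl_length L
  have hWchain : W.Chain' (· ≠ ·) := chain_wl L (chainRadj_toWord v)
  have hWne : W ≠ [] := by
    intro h
    have h0 : 2 * L.length = 0 := by rw [← hWlen, h]; rfl
    omega
  -- coefficient of W in Φ_d v is 1, constant coefficient is 1
  have hself : ∀ d : ℕ, 1 ≤ d → W.length ≤ d →
      coeff d W ((Φ d v : (R (α × Bool) d)ˣ) : R (α × Bool) d) = 1 := by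
    intro d h1 h2
    have hΦv : Φ d v = Φ d (FreeGroup.mk L) := by rw [hLdef, FreeGroup.mk_toWord]
    rw [hΦv, val_Φ_mk d L, coeff_coe _ _ h2]
    have hW' : W = (L.flatMap (pe d)).map Prod.fst := by rw [flatMap_pe_fst, hWdef]
    rw [hW']
    rw [key2 _ (pe_powS_all d L) (by rw [flatMap_pe_fst]; exact hWchain)]
    exact pe_selfcoeff_prod d h1 L
  have hconst : ∀ d : ℕ,
      coeff d [] ((Φ d v : (R (α × Bool) d)ˣ) : R (α × Bool) d) = 1 := by
    intro d
    have hΦv : Φ d v = Φ d (FreeGroup.mk L) := by rw [hLdef, FreeGroup.mk_toWord]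
    rw [hΦv, val_Φ_mk d L, coeff_coe _ _ (by simp)]
    exact key0 _ (pe_powS_all d L)
  set d₀ := 2 * L.length with hd₀def
  have hd₀pos : 1 ≤ d₀ := by omega
  set val₀ := ((Φ d₀ v : (R (α × Bool) d₀)ˣ) : R (α × Bool) d₀) with hval₀
  set Pp : ℕ → Prop :=
    fun m => 0 < m ∧ ∃ l : List (α × Bool), l.length = m ∧ coeff d₀ l (val₀ - 1) ≠ 0
    with hPp
  have hPd₀ : Pp d₀ := by
    refine ⟨hd₀pos, W, by rw [hWlen], ?_⟩
    rw [coeff_sub, hself d₀ hd₀pos (le_of_eq (hWlen.trans hd₀def.symm)),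
      coeff_one_ne d₀ W (le_of_eq (hWlen.trans hd₀def.symm)) hWne]
    norm_num
  have hPex : ∃ m, Pp m := ⟨d₀, hPd₀⟩
  set δ := Nat.find hPex with hδdef
  have hδspec : Pp δ := Nat.find_spec hPex
  have hδle : δ ≤ d₀ := Nat.find_min' hPex hPd₀
  have hδmin : ∀ m, m < δ → ¬ Pp m := fun m hm => Nat.find_min hPex hm
  obtain ⟨hδpos, l₀, hl₀len, hl₀ne⟩ := hδspec
  set A := ((Φ δ v : (R (α × Bool) δ)ˣ) : R (α × Bool) δ) with hAdef
  set Q := A - 1 with hQdef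
  have htrans : ∀ l : List (α × Bool), l.length ≤ δ →
      coeff δ l Q = coeff d₀ l (val₀ - 1) := by
    intro l hl
    have h1 : A = down hδle val₀ := down_Φ hδle v
    have h2 : Q = down hδle (val₀ - 1) := by rw [hQdef, h1, map_sub, map_one]
    rw [h2, coeff_down hδle l hl]
  have hQlow : ∀ l : List (α × Bool), l.length < δ → coeff δ l Q = 0 := by
    intro l hl
    rcases eq_or_ne l [] with rfl | hlne
    · rw [hQdef, coeff_sub, hAdef, hconst δ, coeff_one_nil]
      ring
    · by_contra hne
      rw [htrans l (le_of_lt hl)] at hne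
      exact hδmin l.length hl ⟨List.length_pos_iff.2 hlne, l, rfl, hne⟩
  have hQtop : coeff δ l₀ Q ≠ 0 := by
    rw [htrans l₀ (le_of_eq hl₀len)]
    exact hl₀ne
  have hQc0 : coeff δ [] Q = 0 := hQlow [] (by simpa using hδpos)
  -- multiplication against Q
  have hQmul : ∀ (b : R (α × Bool) δ) (l : List (α × Bool)) (hl : l.length ≤ δ),
      coeff δ l (Q * b) = (if l.length = δ then coeff δ l Q * coeff δ [] b else 0) := by
    intro b l hl
    rw [coeff_mul δ Q b l hl]
    by_cases hld : l.length = δ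
    · rw [if_pos hld]
      rw [Finset.sum_eq_single_of_mem l.length (Finset.mem_range.2 (Nat.lt_succ_self _))]
      · rw [List.take_length, List.drop_length]
      · intro j hj hne
        have hj' : j < l.length := by
          have := Finset.mem_range.1 hj; omega
        have : (l.take j).length < δ := by
          rw [List.length_take]; omega
        rw [hQlow _ this, zero_mul]
    · rw [if_neg hld]
      apply Finset.sum_eq_zero
      intro j hj
      have hj' : j ≤ l.length := Nat.lt_succ_iff.1 (Finset.mem_range.1 hj)
      have : (l.take j).length < δ := by
        rw [List.length_take]; omega
      rw [hQlow _ this, zero_mul]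
  have hmulQ : ∀ (b : R (α × Bool) δ) (l : List (α × Bool)) (hl : l.length ≤ δ),
      coeff δ l (b * Q) = (if l.length = δ then coeff δ l Q * coeff δ [] b else 0) := by
    intro b l hl
    rw [coeff_mul δ b Q l hl]
    by_cases hld : l.length = δ
    · rw [if_pos hld]
      rw [Finset.sum_eq_single_of_mem 0 (Finset.mem_range.2 (Nat.succ_pos _))]
      · rw [List.take_zero, List.drop_zero, mul_comm]
      · intro j hj hne
        have hj' : j ≤ l.length := Nat.lt_succ_iff.1 (Finset.mem_range.1 hj)
        have : (l.drop j).length < δ := by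
          rw [List.length_drop]; omega
        rw [hQlow _ this, mul_zero]
    · rw [if_neg hld]
      apply Finset.sum_eq_zero
      intro j hj
      have hj' : j ≤ l.length := Nat.lt_succ_iff.1 (Finset.mem_range.1 hj)
      have : (l.drop j).length < δ := by
        rw [List.length_drop]; omega
      rw [hQlow _ this, mul_zero]
  have hcomm : ∀ b : R (α × Bool) δ, Q * b = b * Q := by
    intro b
    apply eq_of_coeff
    intro l hl
    rw [hQmul b l hl, hmulQ b l hl]
  have hQQ : Q * Q = 0 := by
    apply eq_of_coeff
    intro l hl
    rw [hQmul Q l hl, coeff_zero]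
    by_cases hld : l.length = δ
    · rw [if_pos hld, hQc0, mul_zero]
    · rw [if_neg hld]
  have hadd_smul : ∀ a b : ℤ, (a + b) • Q = a • Q + b • Q := by
    intro a b
    apply eq_of_coeff
    intro l hl
    rw [coeff_zsmul, coeff_add δ (a • Q) (b • Q) l, coeff_zsmul, coeff_zsmul]
    ring
  have hsub_smul : ∀ a b : ℤ, (a - b) • Q = a • Q - b • Q := by
    intro a b
    apply eq_of_coeff
    intro l hl
    rw [coeff_zsmul, coeff_sub δ (a • Q) (b • Q) l, coeff_zsmul, coeff_zsmul]
    ring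
  -- (1 + a•Q)(1 + b•Q) = 1 + (a+b)•Q
  have hmul2 : ∀ a b : ℤ, (1 + a • Q) * (1 + b • Q) = 1 + (a + b) • Q := by
    intro a b
    have h1 : (a • Q) * (b • Q) = (a * b) • (Q * Q) := by
      rw [smul_mul_assoc, mul_smul_comm, smul_smul]
    rw [mul_add, add_mul, add_mul, mul_one, one_mul, mul_one, h1, hQQ, smul_zero,
      add_zero, hadd_smul]
    abel
  have hA1Q : A = 1 + (1 : ℤ) • Q := by rw [hQdef, one_smul]; abel
  have hApow : ∀ k : ℕ, ((Φ δ v ^ k : (R (α × Bool) δ)ˣ) : R (α × Bool) δ)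
      = 1 + (k : ℤ) • Q := by
    intro k
    induction k with
    | zero => simp
    | succ k ih =>
      rw [pow_succ, Units.val_mul, ih, ← hAdef, hA1Q, hmul2]
      norm_num
  set z : (R (α × Bool) δ)ˣ := Φ δ v ^ n with hzdef
  have hzval : (z : R (α × Bool) δ) = 1 + (n : ℤ) • Q := hApow n
  have hzpow : ∀ m : ℤ, ((z ^ m : (R (α × Bool) δ)ˣ) : R (α × Bool) δ)
      = 1 + ((m * n : ℤ)) • Q := by
    intro m
    obtain ⟨k, hk | hk⟩ := m.eq_nat_or_neg <;> subst hk
    · rw [zpow_natCast, hzdef, ← pow_mul, hApow]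
      norm_num [mul_comm]
    · rw [zpow_neg, zpow_natCast]
      have h1 : ((z ^ k : (R (α × Bool) δ)ˣ) : R (α × Bool) δ) = 1 + ((k * n : ℤ)) • Q := by
        rw [hzdef, ← pow_mul, hApow]
        norm_num [mul_comm]
      have h2 : ((z ^ k : (R (α × Bool) δ)ˣ) : R (α × Bool) δ) * (1 + ((-(k:ℤ)) * n) • Q) = 1 := by
        rw [h1, hmul2]
        norm_num
      rw [Units.inv_eq_of_mul_eq_one_right h2]
  have hQinj : ∀ t : ℤ, t • Q = 0 → t = 0 := by
    intro t ht
    have := congrArg (coeff δ l₀) ht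
    rw [coeff_zsmul, coeff_zero] at this
    rcases mul_eq_zero.1 this with h | h
    · exact h
    · exact absurd h hQtop
  -- z is central
  have hzcomm : ∀ u : (R (α × Bool) δ)ˣ, Commute u z := by
    intro u
    apply Units.ext
    rw [Units.val_mul, Units.val_mul, hzval, mul_add, add_mul, mul_one, one_mul,
      mul_smul_comm, smul_mul_assoc, hcomm]
  haveI hzpnormal : (Subgroup.zpowers z).Normal := by
    constructor
    intro y hy g
    obtain ⟨m, rfl⟩ := Subgroup.mem_zpowers_iff.1 hy
    have h1 : g * z ^ m * g⁻¹ = z ^ m := by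
      rw [((hzcomm g).zpow_right m).eq, mul_assoc, mul_inv_cancel, mul_one]
    rw [h1]
    exact Subgroup.zpow_mem_zpowers z m
  set N := Subgroup.normalClosure {z} with hNdef
  have hNle : N ≤ Subgroup.zpowers z :=
    Subgroup.normalClosure_le_normal (by simp [Subgroup.mem_zpowers])
  set G := (R (α × Bool) δ)ˣ ⧸ N with hGdef
  set ψ : FreeGroup α →* G := (QuotientGroup.mk' N).comp (Φ δ) with hψdef
  have hψv : ψ v = QuotientGroup.mk (Φ δ v) := rfl
  have hg0n : ψ v ^ n = 1 := by
    rw [hψv, ← QuotientGroup.mk_pow, QuotientGroup.eq_one_iff]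
    exact Subgroup.subset_normalClosure (Set.mem_singleton z)
  have hdvd1 : orderOf (ψ v) ∣ n := orderOf_dvd_of_pow_eq_one hg0n
  have hdvd2 : n ∣ orderOf (ψ v) := by
    set k₀ := orderOf (ψ v) with hk₀def
    have hk : ψ v ^ k₀ = 1 := pow_orderOf_eq_one (ψ v)
    rw [hψv, ← QuotientGroup.mk_pow, QuotientGroup.eq_one_iff] at hk
    obtain ⟨m, hm⟩ := Subgroup.mem_zpowers_iff.1 (hNle hk)
    have hval := congrArg (fun u : (R (α × Bool) δ)ˣ => (u : R (α × Bool) δ)) hm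
    rw [hzpow m, hApow] at hval
    have h2 : ((m * n : ℤ) - (k₀ : ℤ)) • Q = 0 := by
      rw [hsub_smul]
      have h3 : (m * (n:ℤ)) • Q = (k₀ : ℤ) • Q := by
        have := hval
        have h4 : ((m * (n:ℤ)) • Q : R (α × Bool) δ)
            = (1 + (m * (n:ℤ)) • Q) - 1 := by abel
        have h5 : (((k₀:ℤ)) • Q : R (α × Bool) δ) = (1 + ((k₀:ℤ)) • Q) - 1 := by abel
        rw [h4, h5, this]
      rw [h3, sub_self]
    have h4 := hQinj _ h2
    have h5 : m * (n:ℤ) = (k₀ : ℤ) := sub_eq_zero.1 h4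
    have h6 : (n : ℤ) ∣ (k₀ : ℤ) := ⟨m, by rw [← h5]; ring⟩
    exact_mod_cast h6
  exact ⟨G, inferInstance, ψ, Nat.dvd_antisymm hdvd1 hdvd2⟩

end Stmt18

theorem stmt_18 (α : Type*) (a₁ a₂ : α) (hrank : a₁ ≠ a₂)
    (v : FreeGroup α) (hv : v ≠ 1) (n : ℕ) (hn : 0 < n) :
    orderOf (QuotientGroup.mk (s := Subgroup.normalClosure {v ^ n}) v) = n := by
  obtain ⟨G, _, ψ, hψ⟩ := Stmt18.master α v hv n hn
  set N := Subgroup.normalClosure {v ^ n} with hN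
  have h1 : (QuotientGroup.mk (s := N) v) ^ n = 1 := by
    rw [← QuotientGroup.mk_pow, QuotientGroup.eq_one_iff]
    exact Subgroup.subset_normalClosure (Set.mem_singleton _)
  have hdvd1 : orderOf (QuotientGroup.mk (s := N) v) ∣ n := orderOf_dvd_of_pow_eq_one h1
  have h2 : N ≤ ψ.ker := by
    apply Subgroup.normalClosure_le_normal
    intro x hx
    rw [Set.mem_singleton_iff] at hx
    subst hx
    rw [SetLike.mem_coe, MonoidHom.mem_ker, map_pow, ← hψ]
    exact pow_orderOf_eq_one (ψ v)
  set θ : (FreeGroup α ⧸ N) →* G := QuotientGroup.lift N ψ h2 with hθ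
  have h3 : θ (QuotientGroup.mk (s := N) v) = ψ v := QuotientGroup.lift_mk' N h2 v
  have hdvd2 : n ∣ orderOf (QuotientGroup.mk (s := N) v) := by
    have := orderOf_map_dvd θ (QuotientGroup.mk (s := N) v)
    rw [h3, hψ] at this
    exact this
  exact Nat.dvd_antisymm hdvd1 hdvd2
end
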